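/- Suppose y ∈ C²((0,1]) ∩ C([0,1]) satisfies y''(x) + (α/x) y'(x) = f(x) on (0,1) with α ≥ 1, y'(0⁺) = 0, y(1) = c, where f is continuous on [0,1]. Then y(x) = c + ∫₀¹ G(x,s) s^{α} f(s) ds for all x ∈ (0,1], where G is the Green's function (G(x,s) = log max(x,s) for α = 1, G(x,s) = (max(x,s)^{1-α} - 1)/(1-α) for α > 1). -/

import Mathlib

open Set Real intervalIntegral Filter Topology

noncomputable def lemG (α m : ℝ) : ℝ :=
  if α = 1 then Real.log m else (m ^ (1 - α) - 1) / (1 - α)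

lemma lemG_one (α : ℝ) : lemG α 1 = 0 := by
  unfold lemG
  split <;> simp

lemma lemG_hasDerivAt (α : ℝ) {m : ℝ} (hm : 0 < m) :
    HasDerivAt (lemG α) (m ^ (-α)) m := by
  by_cases h : α = 1
  · have : HasDerivAt (lemG α) m⁻¹ m := by
      have := Real.hasDerivAt_log hm.ne'
      refine this.congr_of_eventuallyEq ?_
      filter_upwards with u
      simp [lemG, h]
    convert this using 1
    rw [h, Real.rpow_neg_one]
  · have h1 : (1 : ℝ) - α ≠ 0 := sub_ne_zero.2 (Ne.symm h)
    have hD : HasDerivAt (fun u : ℝ => (u ^ (1 - α) - 1) / (1 - α))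
        (((1 - α) * m ^ (1 - α - 1)) / (1 - α)) m :=
      ((Real.hasDerivAt_rpow_const (Or.inl hm.ne')).sub_const 1).div_const (1 - α)
    have : HasDerivAt (lemG α) (((1 - α) * m ^ (1 - α - 1)) / (1 - α)) m := by
      refine hD.congr_of_eventuallyEq ?_
      filter_upwards with u
      simp [lemG, h]
    convert this using 1
    rw [show (1:ℝ) - α - 1 = -α by ring, mul_div_assoc, mul_comm]
    field_simp

lemma deriv_facts {y : ℝ → ℝ} {t : ℝ} (h : ContDiffAt ℝ 2 y t) :
    HasDerivAt (deriv y) (deriv (deriv y) t) t ∧ ContinuousAt (deriv y) t := by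
  obtain ⟨u, hu, hcd⟩ := h.contDiffOn le_rfl (by simp)
  have ho : IsOpen (interior u) := isOpen_interior
  have htu : t ∈ interior u := mem_interior_iff_mem_nhds.2 hu
  have hcd' : ContDiffOn ℝ 2 y (interior u) := hcd.mono interior_subset
  have := (contDiffOn_succ_iff_deriv_of_isOpen (n := 1) ho).1 (by exact_mod_cast hcd')
  have hd1 : ContDiffOn ℝ 1 (deriv y) (interior u) := this.2.2
  have hDA : DifferentiableAt ℝ (deriv y) t :=
    (hd1.contDiffAt (ho.mem_nhds htu)).differentiableAt one_ne_zero
  exact ⟨hDA.hasDerivAt, hDA.continuousAt⟩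

/-- The Lane-Emden Green's function for shape factor `α ≥ 1`. -/
noncomputable def laneEmdenGreen (α x s : ℝ) : ℝ :=
  if α = 1 then Real.log (max x s) else ((max x s) ^ (1 - α) - 1) / (1 - α)

lemma laneEmdenGreen_eq (α x s : ℝ) : laneEmdenGreen α x s = lemG α (max x s) := rfl

theorem stmt4 (α c : ℝ) (hα : 1 ≤ α) (f y : ℝ → ℝ)
    (hf : ContinuousOn f (Icc 0 1))
    (hy : ContinuousOn y (Icc 0 1))
    (hC2 : ∀ x ∈ Ioc (0:ℝ) 1, ContDiffAt ℝ 2 y x)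
    (heq : ∀ x ∈ Ioo (0:ℝ) 1,
      deriv (deriv y) x + (α / x) * deriv y x = f x)
    (hbc0 : Tendsto (deriv y) (𝓝[>] 0) (𝓝 0))
    (hbc1 : y 1 = c) :
    ∀ x ∈ Ioc (0:ℝ) 1,
      y x = c + ∫ s in (0:ℝ)..1, laneEmdenGreen α x s * s ^ α * f s := by
  have hα0 : (0:ℝ) < α := lt_of_lt_of_le one_pos hα
  -- clamped version of f
  set F : ℝ → ℝ := fun s => f (min (max s 0) 1) with hF
  have hFc : Continuous F := by
    apply hf.comp_continuous (by continuity)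
    intro s
    exact ⟨le_min (le_max_right _ _) zero_le_one, min_le_right _ _⟩
  have hFeq : ∀ s ∈ Icc (0:ℝ) 1, F s = f s := by
    intro s hs
    simp only [hF]
    rw [max_eq_left hs.1, min_eq_left hs.2]
  have hPcont : Continuous (fun s : ℝ => s ^ α * F s) :=
    (Real.continuous_rpow_const hα0.le).mul hFc
  set h : ℝ → ℝ := fun t => ∫ s in (0:ℝ)..t, s ^ α * F s with hh
  have hhd : ∀ t : ℝ, HasDerivAt h (t ^ α * F t) t := fun t =>
    intervalIntegral.integral_hasDerivAt_right (hPcont.intervalIntegrable _ _)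
      (hPcont.stronglyMeasurableAtFilter _ _) hPcont.continuousAt
  have hhc : Continuous h :=
    continuous_iff_continuousAt.2 fun t => (hhd t).continuousAt
  have h0 : h 0 = 0 := intervalIntegral.integral_same
  -- the function w
  set w : ℝ → ℝ := fun t => t ^ α * deriv y t - h t with hw
  have hwconst : ∀ t ∈ Ioc (0:ℝ) 1, w t = w 1 := by
    intro t ht
    have hsub : Icc t 1 ⊆ Ioc (0:ℝ) 1 := fun s hs => ⟨ht.1.trans_le hs.1, hs.2⟩
    have hcont : ContinuousOn w (Icc t 1) := by
      apply ContinuousOn.sub _ hhc.continuousOn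
      apply ContinuousOn.mul (Real.continuous_rpow_const hα0.le).continuousOn
      exact fun s hs => ((deriv_facts (hC2 s (hsub hs))).2).continuousWithinAt
    have hderiv : ∀ s ∈ Ico t 1, HasDerivWithinAt w 0 (Ici s) s := by
      intro s hs
      have hs0 : 0 < s := ht.1.trans_le hs.1
      have hs1 : s < 1 := hs.2
      have Hy' := (deriv_facts (hC2 s ⟨hs0, hs1.le⟩)).1
      have Hr : HasDerivAt (fun u : ℝ => u ^ α) (α * s ^ (α - 1)) s :=
        Real.hasDerivAt_rpow_const (Or.inl hs0.ne')
      have Hw := (Hr.mul Hy').sub (hhd s)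
      have e1 : s ^ (α - 1) = s ^ α / s := by
        rw [Real.rpow_sub hs0, Real.rpow_one]
      have e2 : α * s ^ (α - 1) * deriv y s + s ^ α * deriv (deriv y) s - s ^ α * F s = 0 := by
        rw [hFeq s ⟨hs0.le, hs1.le⟩, ← heq s ⟨hs0, hs1⟩, e1]
        field_simp
        ring
      rw [← e2]
      exact Hw.hasDerivWithinAt
    have := constant_of_has_deriv_right_zero hcont hderiv 1 (right_mem_Icc.2 ht.2)
    exact this.symm
  have hw1 : w 1 = 0 := by
    have t1 : Tendsto (fun t : ℝ => t ^ α) (𝓝[>] 0) (𝓝 0) := by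
      have := (Real.continuousAt_rpow_const 0 α (Or.inr hα0.le)).tendsto
      rw [Real.zero_rpow hα0.ne'] at this
      exact this.mono_left nhdsWithin_le_nhds
    have t2 : Tendsto (fun t => t ^ α * deriv y t) (𝓝[>] (0:ℝ)) (𝓝 0) := by
      simpa using t1.mul hbc0
    have t3 : Tendsto h (𝓝[>] (0:ℝ)) (𝓝 0) := by
      have := (hhc.tendsto 0).mono_left (nhdsWithin_le_nhds (s := Ioi (0:ℝ)))
      rwa [h0] at this
    have hlim1 : Tendsto w (𝓝[>] (0:ℝ)) (𝓝 0) := by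
      simpa using t2.sub t3
    have hlim2 : Tendsto w (𝓝[>] (0:ℝ)) (𝓝 (w 1)) := by
      have hev : w =ᶠ[𝓝[>] (0:ℝ)] fun _ => w 1 := by
        filter_upwards [Ioo_mem_nhdsGT_of_mem (Set.mem_Ico.2 ⟨le_refl (0:ℝ), one_pos⟩)] with t ht
        exact hwconst t ⟨ht.1, ht.2.le⟩
      exact Tendsto.congr' hev.symm tendsto_const_nhds
    exact tendsto_nhds_unique hlim2 hlim1
  have key : ∀ t ∈ Ioc (0:ℝ) 1, t ^ α * deriv y t = h t := by
    intro t ht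
    have := (hwconst t ht).trans hw1
    exact sub_eq_zero.mp this
  -- main part
  intro x hx
  obtain ⟨hx0, hx1⟩ := hx
  have hy' : ∀ t ∈ Icc x 1, HasDerivAt y (t ^ (-α) * h t) t := by
    intro t ht
    have ht0 : 0 < t := hx0.trans_le ht.1
    have hmem : t ∈ Ioc (0:ℝ) 1 := ⟨ht0, ht.2⟩
    have hd : HasDerivAt y (deriv y t) t :=
      ((hC2 t hmem).differentiableAt (by norm_num)).hasDerivAt
    have hne : t ^ α ≠ 0 := (Real.rpow_pos_of_pos ht0 α).ne'
    have : deriv y t = t ^ (-α) * h t := by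
      rw [Real.rpow_neg ht0.le, ← key t hmem, inv_mul_cancel_left₀ hne]
    rwa [this] at hd
  have hicont : ContinuousOn (fun t : ℝ => t ^ (-α) * h t) (Icc x 1) := by
    apply ContinuousOn.mul _ hhc.continuousOn
    intro s hs
    exact (Real.continuousAt_rpow_const s (-α) (Or.inl (hx0.trans_le hs.1).ne')).continuousWithinAt
  have hint : ∫ t in x..1, t ^ (-α) * h t = y 1 - y x := by
    apply intervalIntegral.integral_eq_sub_of_hasDerivAt
    · intro t ht
      rw [uIcc_of_le hx1] at ht
      exact hy' t ht
    · rw [← uIcc_of_le hx1] at hicont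
      exact hicont.intervalIntegrable
  -- integral computations
  set L : ℝ → ℝ := fun s => laneEmdenGreen α x s * s ^ α * f s with hL
  have I1 : ∫ s in (0:ℝ)..x, L s = lemG α x * h x := by
    rw [show ∫ s in (0:ℝ)..x, L s = ∫ s in (0:ℝ)..x, lemG α x * (s ^ α * F s) from ?_,
      intervalIntegral.integral_const_mul]
    apply intervalIntegral.integral_congr
    intro s hs
    rw [uIcc_of_le hx0.le] at hs
    rw [hL]
    simp only
    rw [laneEmdenGreen_eq, max_eq_left hs.2, hFeq s ⟨hs.1, hs.2.trans hx1⟩, mul_assoc]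
  have hu' : IntervalIntegrable (fun s : ℝ => s ^ (-α)) MeasureTheory.volume x 1 := by
    rw [← uIcc_of_le hx1] at *
    apply ContinuousOn.intervalIntegrable
    intro s hs
    rw [uIcc_of_le hx1] at hs
    exact (Real.continuousAt_rpow_const s (-α) (Or.inl (hx0.trans_le hs.1).ne')).continuousWithinAt
  have I2 : ∫ s in x..1, L s = lemG α 1 * h 1 - lemG α x * h x - ∫ s in x..1, s ^ (-α) * h s := by
    rw [show ∫ s in x..1, L s = ∫ s in x..1, lemG α s * (s ^ α * F s) from ?_]
    · exact intervalIntegral.integral_mul_deriv_eq_deriv_mul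
        (fun s hs => lemG_hasDerivAt α (hx0.trans_le ((uIcc_of_le hx1 ▸ hs).1)))
        (fun s _ => hhd s) hu' (hPcont.intervalIntegrable _ _)
    apply intervalIntegral.integral_congr
    intro s hs
    rw [uIcc_of_le hx1] at hs
    rw [hL]
    simp only
    rw [laneEmdenGreen_eq, max_eq_right hs.1, hFeq s ⟨hx0.le.trans hs.1, hs.2⟩, mul_assoc]
  have hLc1 : IntervalIntegrable L MeasureTheory.volume 0 x := by
    apply ContinuousOn.intervalIntegrable
    rw [uIcc_of_le hx0.le]
    intro s hs
    apply ContinuousWithinAt.mul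
    apply ContinuousWithinAt.mul
    · have hre : laneEmdenGreen α x = fun s => lemG α (max x s) := rfl
      rw [hre]
      exact ((lemG_hasDerivAt α (lt_of_lt_of_le hx0 (le_max_left x s))).continuousAt.comp
        ((continuous_const.max continuous_id).continuousAt)).continuousWithinAt
    · exact (Real.continuous_rpow_const hα0.le).continuousWithinAt
    · exact (hf s ⟨hs.1, hs.2.trans hx1⟩).mono (Icc_subset_Icc le_rfl hx1)
  have hLc2 : IntervalIntegrable L MeasureTheory.volume x 1 := by
    apply ContinuousOn.intervalIntegrable
    rw [uIcc_of_le hx1]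
    intro s hs
    apply ContinuousWithinAt.mul
    apply ContinuousWithinAt.mul
    · have hre : laneEmdenGreen α x = fun s => lemG α (max x s) := rfl
      rw [hre]
      exact ((lemG_hasDerivAt α (lt_of_lt_of_le hx0 (le_max_left x s))).continuousAt.comp
        ((continuous_const.max continuous_id).continuousAt)).continuousWithinAt
    · exact (Real.continuous_rpow_const hα0.le).continuousWithinAt
    · exact (hf s ⟨hx0.le.trans hs.1, hs.2⟩).mono (Icc_subset_Icc (hx0.le) le_rfl)
  have hsplit : ∫ s in (0:ℝ)..1, L s = (∫ s in (0:ℝ)..x, L s) + ∫ s in x..1, L s :=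
    (intervalIntegral.integral_add_adjacent_intervals hLc1 hLc2).symm
  rw [hsplit, I1, I2, lemG_one]
  have : y x = y 1 - ∫ t in x..1, t ^ (-α) * h t := by rw [hint]; ring
  rw [this, hbc1]
  ring
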